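/- Let Γ = (V, E) be a finite simple graph whose complement Γ̄ is connected and has at least 3 vertices, and let < be any linear order on V. Then there exists a vertex u ∈ V such that, in the shortlex automaton 𝓐 of Γ with respect to <, the singleton state {u} lies simultaneously on a directed cycle of length 2 and on a directed cycle of length 3. -/
import Mathlib


open Filter

noncomputable section

/-- A transition of the geodesic automaton of a graph `Γ`: from the state `s`
one may read a letter `v ∉ s` and move to the state `{v} ∪ (st(v) ∩ s)`. -/
def geoTrans {V : Type*} (Γ : SimpleGraph V) (s t : Set V) : Prop :=
  ∃ v : V, v ∉ s ∧ t = insert v (Γ.neighborSet v ∩ s)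

/-- A transition of the shortlex automaton of `Γ` with respect to a linear
order `lo` on the vertices: a geodesic transition reading `v` is kept only if
`st(v) ∩ s = ∅` or `v < min (st(v) ∩ s)`, i.e. `v` is smaller than every
element of `st(v) ∩ s`. -/
def slTrans {V : Type*} (Γ : SimpleGraph V) (lo : LinearOrder V) (s t : Set V) : Prop :=
  ∃ v : V, v ∉ s ∧ (∀ w ∈ Γ.neighborSet v ∩ s, lo.lt v w) ∧
    t = insert v (Γ.neighborSet v ∩ s)

/-- In a connected graph on at least 3 vertices, some vertex has two distinct
neighbours. -/
lemma exists_two_nbrs {V : Type*} [Fintype V] (G : SimpleGraph V) (hconn : G.Connected)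
    (hcard : 3 ≤ Fintype.card V) :
    ∃ u a b : V, a ≠ b ∧ G.Adj u a ∧ G.Adj u b := by
  classical
  by_contra h
  push_neg at h
  have hsub : ∀ u : V, (G.neighborSet u).Subsingleton := by
    intro u p hp q hq
    by_contra hpq
    exact h u p q hpq hp hq
  have key : ∀ y u : V, ∀ _ : G.Walk y u, u = y ∨ G.Adj y u := by
    intro y u p
    induction p with
    | nil => exact Or.inl rfl
    | @cons a b c hab q ih =>
      rcases ih with rfl | hbc
      · exact Or.inr hab
      · exact Or.inl (hsub b hbc hab.symm)
  obtain ⟨x⟩ := hconn.nonempty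
  -- get two more distinct vertices
  have h1 : 1 < Fintype.card V := by omega
  obtain ⟨y, hyx⟩ := Fintype.exists_ne_of_one_lt_card h1 x
  have hz : ∃ z : V, z ∉ ({x, y} : Finset V) := by
    by_contra hz
    push_neg at hz
    have : (Finset.univ : Finset V) ⊆ {x, y} := fun z _ => hz z
    have := Finset.card_le_card this
    simp only [Finset.card_univ] at this
    have : ({x, y} : Finset V).card ≤ 2 := Finset.card_insert_le x {y} |>.trans (by simp)
    omega
  obtain ⟨z, hzmem⟩ := hz
  simp only [Finset.mem_insert, Finset.mem_singleton, not_or] at hzmem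
  obtain ⟨hzx, hzy⟩ := hzmem
  have hxy : G.Adj x y := by
    rcases key x y (hconn.preconnected x y).some with h' | h'
    · exact absurd h' hyx
    · exact h'
  have hxz : G.Adj x z := by
    rcases key x z (hconn.preconnected x z).some with h' | h'
    · exact absurd h' hzx
    · exact h'
  exact h x y z (fun hh => hzy hh.symm) hxy hxz

/-- A shortlex transition between singleton states of non-adjacent vertices. -/
lemma slTrans_single {V : Type*} (Γ : SimpleGraph V) (lo : LinearOrder V)
    {x y : V} (hxy : y ≠ x) (hadj : ¬ Γ.Adj y x) :
    slTrans Γ lo ({x} : Set V) {y} := by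
  have hempty : Γ.neighborSet y ∩ {x} = ∅ := by
    ext z
    simp only [Set.mem_inter_iff, SimpleGraph.mem_neighborSet, Set.mem_singleton_iff,
      Set.mem_empty_iff_false, iff_false, not_and]
    rintro h rfl
    exact hadj h
  exact ⟨y, by simp [hxy], by simp [hempty], by simp [hempty]⟩

theorem shortlex_singleton_on_two_and_three_cycle
    {V : Type*} [Fintype V] (Γ : SimpleGraph V) (hconn : Γᶜ.Connected)
    (hcard : 3 ≤ Fintype.card V) (lo : LinearOrder V) :
    ∃ u : V,
      (∃ s : Set V, slTrans Γ lo ({u} : Set V) s ∧ slTrans Γ lo s ({u} : Set V)) ∧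
      (∃ s t : Set V, slTrans Γ lo ({u} : Set V) s ∧ slTrans Γ lo s t ∧
        slTrans Γ lo t ({u} : Set V)) := by
  letI := lo
  obtain ⟨u, a, b, hab, hua, hub⟩ := exists_two_nbrs Γᶜ hconn hcard
  rw [SimpleGraph.compl_adj] at hua hub
  obtain ⟨hua1, hua2⟩ := hua
  obtain ⟨hub1, hub2⟩ := hub
  refine ⟨u, ⟨{a}, slTrans_single Γ lo (Ne.symm hua1) (fun h => hua2 h.symm),
    slTrans_single Γ lo hua1 hua2⟩, ?_⟩
  by_cases hGab : Γ.Adj a b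
  · -- a, b adjacent in Γ : use the 2-state {min,max} in the middle
    -- WLOG c < d with Γ.Adj c d, u ≠ c, u ≠ d, ¬Γ.Adj u c, ¬Γ.Adj u d
    have main : ∀ c d : V, Γ.Adj c d → lo.lt c d → u ≠ c → u ≠ d →
        ¬Γ.Adj u c → ¬Γ.Adj u d →
        ∃ s t : Set V, slTrans Γ lo ({u} : Set V) s ∧ slTrans Γ lo s t ∧
          slTrans Γ lo t ({u} : Set V) := by
      intro c d hcd hlt huc hud hGuc hGud
      refine ⟨{d}, {c, d}, slTrans_single Γ lo (Ne.symm hud) (fun h => hGud h.symm), ?_, ?_⟩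
      · -- {d} → {c, d} reading c
        have hset : Γ.neighborSet c ∩ {d} = {d} := by
          ext z
          simp only [Set.mem_inter_iff, SimpleGraph.mem_neighborSet, Set.mem_singleton_iff]
          exact ⟨fun h => h.2, fun h => ⟨h ▸ hcd, h⟩⟩
        refine ⟨c, by simp [hcd.ne], ?_, by rw [hset]⟩
        intro w hw
        rw [hset] at hw
        rw [hw]
        exact hlt
      · -- {c, d} → {u} reading u
        have hset : Γ.neighborSet u ∩ {c, d} = ∅ := by
          ext z
          simp only [Set.mem_inter_iff, SimpleGraph.mem_neighborSet, Set.mem_insert_iff,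
            Set.mem_singleton_iff, Set.mem_empty_iff_false, iff_false, not_and]
          rintro h (rfl | rfl)
          · exact hGuc h
          · exact hGud h
        exact ⟨u, by simp [huc, hud], by simp [hset], by simp [hset]⟩
    rcases lt_or_gt_of_ne hab with hlt | hlt
    · exact main a b hGab hlt hua1 hub1 hua2 hub2
    · exact main b a hGab.symm hlt hub1 hua1 hub2 hua2
  · -- a, b not adjacent in Γ : triangle {u} → {a} → {b} → {u}
    exact ⟨{a}, {b}, slTrans_single Γ lo (Ne.symm hua1) (fun h => hua2 h.symm),
      slTrans_single Γ lo (Ne.symm hab) (fun h => hGab h.symm),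
      slTrans_single Γ lo hub1 hub2⟩
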